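/- If G is a plain group, i.e., a free product of finite groups G_1, ..., G_m and infinite cyclic groups C_1, ..., C_n, and Σ consists of all nontrivial elements of each G_i together with a generator and its inverse for each C_j, then every block of the undirected Cayley graph Γ(G, Σ) has diameter one (i.e., every block is a complete graph). -/

import Mathlib

/-- A graph is geodetic if between any two vertices there is a unique shortest walk
(equivalently, a unique shortest path). -/
def IsGeodetic {V : Type*} (G : SimpleGraph V) : Prop :=
  ∀ u v : V, ∃! p : G.Walk u v, ∀ q : G.Walk u v, p.length ≤ q.length

/-- `c : ZMod n → V` is an embedded circuit of length `n`: the vertices are distinct and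
cyclically consecutive vertices are adjacent. -/
def IsEmbCircuit {V : Type*} (G : SimpleGraph V) (n : ℕ) (c : ZMod n → V) : Prop :=
  2 ≤ n ∧ Function.Injective c ∧ ∀ i : ZMod n, G.Adj (c i) (c (i + 1))

/-- An embedded circuit is isometrically embedded if the graph distance between any two of its
vertices equals the cyclic distance `min {j-i, n+i-j}` along the circuit. -/
def IsIEC {V : Type*} (G : SimpleGraph V) (n : ℕ) (c : ZMod n → V) : Prop :=
  IsEmbCircuit G n c ∧ ∀ i j : ZMod n, G.dist (c i) (c j) = min (j - i).val (i - j).val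

/-- A set of vertices induces a two-connected subgraph: the induced subgraph is connected
and remains connected after removing any one vertex. -/
def IsTwoConnectedSet {V : Type*} (G : SimpleGraph V) (S : Set V) : Prop :=
  (G.induce S).Connected ∧ ∀ v ∈ S, (G.induce (S \ {v})).Connected

/-- A block is a maximal two-connected (induced) subgraph, given by its vertex set. -/
def IsBlock {V : Type*} (G : SimpleGraph V) (S : Set V) : Prop :=
  IsTwoConnectedSet G S ∧ ∀ S' : Set V, IsTwoConnectedSet G S' → S ⊆ S' → S' = S

/-- The undirected Cayley graph of a group `G` with respect to a set `S`:
distinct `g, h` are adjacent iff `g⁻¹ * h ∈ S ∪ S⁻¹`. -/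
def CayleyGraph (G : Type*) [Group G] (S : Set G) : SimpleGraph G where
  Adj g h := g ≠ h ∧ g⁻¹ * h ∈ S ∪ S⁻¹
  symm := by
    constructor
    rintro g h ⟨hne, hm⟩
    refine ⟨hne.symm, ?_⟩
    have h2 : (g⁻¹ * h)⁻¹ ∈ S ∪ S⁻¹ := by
      rcases hm with hm | hm
      · exact Or.inr (by simpa using hm)
      · exact Or.inl (by simpa using hm)
    simpa [mul_inv_rev] using h2
  loopless := ⟨fun g hg => hg.1 rfl⟩

/-! ### Auxiliary material for `stmt14` -/

open Monoid Monoid.CoprodI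

section PlainAux
set_option linter.unusedSectionVars false

variable {ι : Type} {H : ι → Type} [∀ i, Group (H i)]

/-- The generating set of a plain group presentation. -/
abbrev plainSet (H : ι → Type) [∀ i, Group (H i)] (P : ι → Prop) (gen : ∀ i, H i) :
    Set (CoprodI H) :=
  {x : CoprodI H | ∃ (i : ι) (h : H i), x = Monoid.CoprodI.of h ∧
    ((P i ∧ h ≠ 1) ∨ (¬ P i ∧ (h = gen i ∨ h = (gen i)⁻¹)))}

lemma inv_mem_gens {S : Set (CoprodI H)} {x : CoprodI H} (hx : x ∈ S ∪ S⁻¹) :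
    x⁻¹ ∈ S ∪ S⁻¹ := by
  rcases hx with hx | hx
  · exact Or.inr (by simpa using hx)
  · exact Or.inl (by simpa using hx)

lemma gen_unit {K : Type} [Group K] (e : K ≃* Multiplicative ℤ) (g : K)
    (hg : ∀ x : K, x ∈ Subgroup.zpowers g) :
    Multiplicative.toAdd (e g) = 1 ∨ Multiplicative.toAdd (e g) = -1 := by
  obtain ⟨t, ht⟩ := Subgroup.mem_zpowers_iff.mp (hg (e.symm (Multiplicative.ofAdd 1)))
  have h1 : (e g) ^ t = Multiplicative.ofAdd 1 := by
    rw [← map_zpow, ht, MulEquiv.apply_symm_apply]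
  have h2 : t * Multiplicative.toAdd (e g) = 1 := by
    have h3 := congrArg Multiplicative.toAdd h1
    rw [toAdd_zpow] at h3
    simpa [smul_eq_mul] using h3
  exact Int.isUnit_iff.mp (IsUnit.of_mul_eq_one t (by linarith))

section Dec
variable [DecidableEq ι] [∀ i, DecidableEq (H i)]

/-- The last letter (if any) of the normal form of an element of the free product. -/
def lastL (x : CoprodI H) : Option (Σ i, H i) := (Word.equiv x).toList.getLast?

lemma equiv_eq_smul (x : CoprodI H) : Word.equiv x = x • Word.empty := rfl

lemma equiv_one' : (Word.equiv (1 : CoprodI H)) = Word.empty := by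
  rw [equiv_eq_smul, one_smul]

lemma equiv_mul_of {j : ι} (r : H j) (y : CoprodI H) :
    Word.equiv (of r * y) = of r • Word.equiv y := by
  rw [equiv_eq_smul, equiv_eq_smul, mul_smul]

lemma rcons_toList {j : ι} (p : Word.Pair H j) :
    (Word.rcons p).toList = if _ : p.head = 1 then p.tail.toList
      else ⟨j, p.head⟩ :: p.tail.toList := by
  rw [Word.rcons]
  split_ifs <;> simp [Word.cons]

lemma equiv_of {j : ι} (r : H j) (hr : r ≠ 1) :
    (Word.equiv (of r)).toList = [⟨j, r⟩] := by
  have h : Word.equiv (of r) = Word.cons r Word.empty (by intro h; cases h) hr := by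
    rw [Equiv.apply_eq_iff_eq_symm_apply]
    show of r = Word.prod _
    simp
  rw [h]
  simp [Word.cons]

lemma of_ne_one {j : ι} (r : H j) (hr : r ≠ 1) : (of r : CoprodI H) ≠ 1 := by
  intro h
  have h1 := equiv_of r hr
  rw [h, equiv_one'] at h1
  simp [Word.empty] at h1

lemma of_letter_eq {j k : ι} (r : H j) (s : H k) (hr : r ≠ 1)
    (h : (of r : CoprodI H) = of s) : (⟨j, r⟩ : Σ i, H i) = ⟨k, s⟩ := by
  have hs : s ≠ 1 := by
    rintro rfl
    rw [map_one] at h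
    exact of_ne_one r hr h
  have h1 := equiv_of r hr
  rw [h, equiv_of s hs] at h1
  simpa using h1.symm

lemma lastL_one : lastL (1 : CoprodI H) = none := by
  rw [lastL, equiv_one']
  rfl

lemma lastL_of {j : ι} (r : H j) (hr : r ≠ 1) : lastL (of r) = some ⟨j, r⟩ := by
  rw [lastL, equiv_of r hr]
  rfl

lemma lastL_mul_of {j : ι} (s : H j) (y : CoprodI H) :
    lastL (of s * y) = lastL y ∨ ∃ h₀ : H j, y = of h₀ := by
  obtain ⟨q, hq⟩ : ∃ q, Word.equivPair j (Word.equiv y) = q := ⟨_, rfl⟩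
  have h2 : Word.rcons q = Word.equiv y := by
    rw [← hq, ← Word.equivPair_symm, Equiv.symm_apply_apply]
  have h3 : Word.equiv (of s * y) =
      Word.rcons ⟨s * q.head, q.tail, q.fstIdx_ne⟩ := by
    rw [equiv_mul_of, Word.of_smul_def, hq]
  by_cases ht : q.tail.toList = []
  · right
    refine ⟨q.head, ?_⟩
    have h1 : (Word.equiv y).prod = y := Word.equiv.symm_apply_apply y
    have h4 : q.tail.prod = 1 := by
      unfold Word.prod
      rw [ht]; rfl
    rw [← h1, ← h2, Word.prod_rcons, h4, mul_one]
  · left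
    obtain ⟨c, t', hct⟩ := List.exists_cons_of_ne_nil ht
    unfold lastL
    rw [h3, ← h2, rcons_toList, rcons_toList]
    split_ifs <;> simp [hct]

variable {P : ι → Prop} {gen : ∀ i, H i}

lemma letter_extract
    (hcyc : ∀ i, ¬ P i → Nonempty (H i ≃* Multiplicative ℤ) ∧
      ∀ x : H i, x ∈ Subgroup.zpowers (gen i))
    {x : CoprodI H} (hx : x ∈ plainSet H P gen ∪ (plainSet H P gen)⁻¹) :
    ∃ (j : ι) (s : H j), x = of s ∧ s ≠ 1 := by
  have key : ∀ y : CoprodI H, y ∈ plainSet H P gen → ∃ (j : ι) (s : H j), y = of s ∧ s ≠ 1 := by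
    rintro y ⟨j, s, rfl, hcond⟩
    refine ⟨j, s, rfl, ?_⟩
    rcases hcond with ⟨_, hs⟩ | ⟨hP, hs⟩
    · exact hs
    · obtain ⟨e⟩ := (hcyc j hP).1
      have hg := gen_unit e (gen j) (hcyc j hP).2
      have hgen1 : gen j ≠ 1 := by
        rintro h1
        rw [h1, map_one] at hg
        simp at hg
      rcases hs with rfl | rfl
      · exact hgen1
      · simpa using hgen1
  rcases hx with hx | hx
  · exact key x hx
  · obtain ⟨j, s, hy, hs⟩ := key x⁻¹ (by simpa using hx)
    exact ⟨j, s⁻¹, by rw [map_inv, ← hy, inv_inv], by simpa using hs⟩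

lemma letter_in_factor
    (hcyc : ∀ i, ¬ P i → Nonempty (H i ≃* Multiplicative ℤ) ∧
      ∀ x : H i, x ∈ Subgroup.zpowers (gen i))
    {i : ι} (hP : ¬ P i) (s : H i) (hs : s ≠ 1)
    (hmem : (of s : CoprodI H) ∈ plainSet H P gen ∪ (plainSet H P gen)⁻¹) :
    s = gen i ∨ s = (gen i)⁻¹ := by
  have key : ∀ r : H i, r ≠ 1 → (of r : CoprodI H) ∈ plainSet H P gen →
      r = gen i ∨ r = (gen i)⁻¹ := by
    rintro r hr ⟨j, h', heq, hcond⟩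
    obtain ⟨rfl, hheq⟩ := Sigma.mk.inj_iff.mp (of_letter_eq r h' hr heq)
    rw [heq_iff_eq] at hheq
    subst hheq
    rcases hcond with ⟨hPi, _⟩ | ⟨_, hval⟩
    · exact absurd hPi hP
    · exact hval
  rcases hmem with hx | hx
  · exact key s hs hx
  · have h1 : (of s⁻¹ : CoprodI H) ∈ plainSet H P gen := by
      rw [map_inv]
      simpa using hx
    rcases key s⁻¹ (by simpa using hs) h1 with h | h
    · right; rw [← h, inv_inv]
    · left; exact inv_injective h

/-- The separation lemma: two non-adjacent vertices of the Cayley graph of a plain group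
are separated by a cut vertex. -/
lemma sep
    (hcyc : ∀ i, ¬ P i → Nonempty (H i ≃* Multiplicative ℤ) ∧
      ∀ x : H i, x ∈ Subgroup.zpowers (gen i))
    (u v : CoprodI H) (huv : u ≠ v)
    (hna : ¬ (CayleyGraph (CoprodI H) (plainSet H P gen)).Adj u v) :
    ∃ w : CoprodI H, w ≠ u ∧ w ≠ v ∧
      ∀ p : (CayleyGraph (CoprodI H) (plainSet H P gen)).Walk u v, w ∈ p.support := by
  have hadj : ∀ x y : CoprodI H, (CayleyGraph (CoprodI H) (plainSet H P gen)).Adj x y ↔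
      x ≠ y ∧ x⁻¹ * y ∈ plainSet H P gen ∪ (plainSet H P gen)⁻¹ := fun _ _ => Iff.rfl
  have hgne : u⁻¹ * v ∉ plainSet H P gen ∪ (plainSet H P gen)⁻¹ :=
    fun h => hna ((hadj u v).mpr ⟨huv, h⟩)
  have hg1 : v⁻¹ * u ≠ 1 := by
    intro h
    exact huv (inv_mul_eq_one.mp h).symm
  have hgmem : v⁻¹ * u ∉ plainSet H P gen ∪ (plainSet H P gen)⁻¹ := by
    intro h
    exact hgne (by simpa [mul_inv_rev] using inv_mem_gens h)
  have hnil : (Word.equiv (v⁻¹ * u)).toList ≠ [] := by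
    intro h
    apply hg1
    apply Word.equiv.injective
    rw [equiv_one']
    exact Word.ext h
  obtain ⟨⟨i, a⟩, hla⟩ : ∃ la, (Word.equiv (v⁻¹ * u)).toList.getLast? = some la :=
    ⟨_, List.getLast?_eq_getLast hnil⟩
  have ha1 : a ≠ 1 := by
    apply (Word.equiv (v⁻¹ * u)).ne_one ⟨i, a⟩
    obtain ⟨h, hx⟩ := List.mem_getLast?_eq_getLast (Option.mem_def.mpr hla)
    rw [hx]
    exact List.getLast_mem h
  -- construct the sign data
  obtain ⟨T, b₀, hb₀1, hTa, hb₀mem, hP5⟩ :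
      ∃ (T : H i → Prop) (b₀ : H i), b₀ ≠ 1 ∧ T a ∧
        (of b₀ : CoprodI H) ∈ plainSet H P gen ∪ (plainSet H P gen)⁻¹ ∧
        (∀ s h₀ : H i, (of s : CoprodI H) ∈ plainSet H P gen ∪ (plainSet H P gen)⁻¹ →
          s ≠ 1 → ¬(h₀ ≠ 1 ∧ T h₀) → T (s * h₀) → s * h₀ = b₀) := by
    by_cases hP : P i
    · exact ⟨(· = a), a, ha1, rfl, Or.inl ⟨i, a, rfl, Or.inl ⟨hP, ha1⟩⟩,
        fun s h₀ _ _ _ hT => hT⟩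
    · obtain ⟨e⟩ := (hcyc i hP).1
      have hzp := (hcyc i hP).2
      set E : H i → ℤ := fun x => Multiplicative.toAdd (e x) with hE
      have hEmul : ∀ x y, E (x * y) = E x + E y := by
        intro x y; simp [hE, map_mul]
      have hEinj : ∀ x y, E x = E y → x = y := by
        intro x y h
        exact e.injective (Multiplicative.toAdd.injective h)
      have hε : E (gen i) = 1 ∨ E (gen i) = -1 := gen_unit e (gen i) hzp
      have hE1 : ∀ x : H i, x = 1 ↔ E x = 0 := by
        intro x
        constructor
        · rintro rfl; simp [hE]
        · intro h; exact hEinj x 1 (by simpa [hE] using h)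
      have hEinv : ∀ x : H i, E x⁻¹ = - E x := by
        intro x; simp [hE, map_inv]
      have hgens : ∀ s : H i, s ≠ 1 →
          (of s : CoprodI H) ∈ plainSet H P gen ∪ (plainSet H P gen)⁻¹ →
          E s = 1 ∨ E s = -1 := by
        intro s hs hm
        rcases letter_in_factor hcyc hP s hs hm with rfl | rfl
        · exact hε
        · rw [hEinv]; omega
      have hA : E a ≠ 0 := fun h => ha1 ((hE1 a).mpr h)
      set σ : ℤ := if 0 < E a then 1 else -1 with hσ
      have hσ' : (σ = 1 ∨ σ = -1) ∧ (0 < E a → σ = 1) ∧ (E a < 0 → σ = -1) := by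
        rw [hσ]; split_ifs with h
        · exact ⟨Or.inl rfl, fun _ => rfl, fun h' => absurd h (by omega)⟩
        · exact ⟨Or.inr rfl, fun h' => absurd h' h, fun _ => rfl⟩
      set b₀ := e.symm (Multiplicative.ofAdd σ) with hb₀
      have hEb₀ : E b₀ = σ := by simp [hE, hb₀]
      refine ⟨fun b => (0 < E b ∧ 0 < E a) ∨ (E b < 0 ∧ E a < 0), b₀, ?_, ?_, ?_, ?_⟩
      · intro h
        have h0 : E b₀ = 0 := (hE1 b₀).mp h
        rw [hEb₀] at h0
        rcases hσ'.1 with h1 | h1 <;> omega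
      · omega
      · have hb : b₀ = gen i ∨ b₀ = (gen i)⁻¹ := by
          have hgi : E b₀ = E (gen i) ∨ E b₀ = E (gen i)⁻¹ := by
            rw [hEb₀, hEinv]
            rcases hσ'.1 with h1 | h1 <;> rcases hε with h2 | h2 <;> omega
          rcases hgi with h | h
          · exact Or.inl (hEinj _ _ h)
          · exact Or.inr (hEinj _ _ h)
        exact Or.inl ⟨i, b₀, rfl, Or.inr ⟨hP, hb⟩⟩
      · intro s h₀ hm hs hnT hT
        have hEs := hgens s hs hm
        have hEm := hEmul s h₀
        rw [hEm] at hT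
        have hnT' : E h₀ = 0 ∨ ¬((0 < E h₀ ∧ 0 < E a) ∨ (E h₀ < 0 ∧ E a < 0)) := by
          by_cases h0 : h₀ = 1
          · exact Or.inl ((hE1 h₀).mp h0)
          · exact Or.inr (fun hth => hnT ⟨h0, hth⟩)
        apply hEinj
        rw [hEm, hEb₀]
        obtain ⟨hσ1, hσ2, hσ3⟩ := hσ'
        rcases hEs with h1 | h1 <;> rcases hnT' with h2 | h2 <;> omega
  -- the separating data
  set InB : CoprodI H → Prop := fun z => ∃ b : H i, lastL z = some ⟨i, b⟩ ∧ T b with hInB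
  have step' : ∀ (j : ι) (s : H j) (z : CoprodI H), s ≠ 1 →
      (of s : CoprodI H) ∈ plainSet H P gen ∪ (plainSet H P gen)⁻¹ →
      ¬ InB z → InB (of s * z) → of s * z = of b₀ := by
    intro j s z hs hmem hz hz'
    rcases lastL_mul_of s z with h | ⟨h₀, rfl⟩
    · obtain ⟨b, hb, hTb⟩ := hz'
      rw [h] at hb
      exact absurd ⟨b, hb, hTb⟩ hz
    · have hof : (of s : CoprodI H) * of h₀ = of (s * h₀) := (map_mul of s h₀).symm
      by_cases h1 : s * h₀ = 1
      · exfalso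
        obtain ⟨b, hb, _⟩ := hz'
        rw [hof, h1, map_one, lastL_one] at hb
        exact nomatch hb
      · obtain ⟨b, hb, hTb⟩ := hz'
        rw [hof, lastL_of _ h1] at hb
        obtain ⟨rfl, hheq⟩ := Sigma.mk.inj_iff.mp (Option.some.inj hb)
        rw [heq_iff_eq] at hheq
        have hnz : ¬(h₀ ≠ 1 ∧ T h₀) := by
          rintro ⟨h₀1, hTh⟩
          exact hz ⟨h₀, lastL_of h₀ h₀1, hTh⟩
        rw [hof]
        exact congrArg of (hP5 s h₀ hmem hs hnz (hheq ▸ hTb))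
  set w : CoprodI H := u * (of b₀)⁻¹ with hwdef
  have main : ∀ (x z : CoprodI H)
      (p : (CayleyGraph (CoprodI H) (plainSet H P gen)).Walk x z),
      InB (z⁻¹ * u) → ¬ InB (x⁻¹ * u) → w ∈ p.support := by
    intro x z p
    induction p with
    | nil =>
      intro hz hx
      exact absurd hz hx
    | @cons x y _ hxy p ih =>
      intro hz hx
      obtain ⟨hne, hσ⟩ := hxy
      obtain ⟨j, s, hσeq, hs1⟩ := letter_extract hcyc (inv_mem_gens hσ)
      have hkey : y⁻¹ * u = of s * (x⁻¹ * u) := by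
        rw [← hσeq]
        group
      show w ∈ x :: p.support
      by_cases hy : InB (y⁻¹ * u)
      · have h2 : of s * (x⁻¹ * u) = of b₀ :=
          step' j s _ hs1 (hσeq ▸ inv_mem_gens hσ) hx (hkey ▸ hy)
        have hyw : y = w := by
          rw [hwdef]
          have h3 : y⁻¹ * u = of b₀ := by rw [hkey, h2]
          rw [← h3]
          group
        exact List.mem_cons_of_mem _ (hyw ▸ p.start_mem_support)
      · exact List.mem_cons_of_mem _ (ih hz hy)
  refine ⟨w, ?_, ?_, ?_⟩
  · intro h
    rw [hwdef] at h
    have : (of b₀ : CoprodI H) = 1 := by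
      have := congrArg (fun z => u⁻¹ * z) h
      simp at this
      rw [eq_comm, ← inv_inj] at this
      simpa using this
    exact of_ne_one b₀ hb₀1 this
  · intro h
    apply hgne
    have : u⁻¹ * v = (of b₀)⁻¹ := by rw [← h, hwdef]; group
    rw [this]
    exact inv_mem_gens hb₀mem
  · intro p
    apply main u v p ⟨a, hla, hTa⟩
    intro h
    obtain ⟨b, hb, _⟩ := h
    rw [inv_mul_cancel, lastL_one] at hb
    exact nomatch hb

end Dec
end PlainAux

theorem stmt14 {ι : Type} [Fintype ι] (H : ι → Type) [∀ i, Group (H i)]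
    (P : ι → Prop) (gen : ∀ i, H i)
    (hfin : ∀ i, P i → Finite (H i))
    (hcyc : ∀ i, ¬ P i → Nonempty (H i ≃* Multiplicative ℤ) ∧
      ∀ x : H i, x ∈ Subgroup.zpowers (gen i)) :
    ∀ B : Set (Monoid.CoprodI H),
      IsBlock (CayleyGraph (Monoid.CoprodI H)
        {x : Monoid.CoprodI H | ∃ (i : ι) (h : H i), x = Monoid.CoprodI.of h ∧
          ((P i ∧ h ≠ 1) ∨ (¬ P i ∧ (h = gen i ∨ h = (gen i)⁻¹)))}) B →
      ∀ u ∈ B, ∀ v ∈ B, u ≠ v →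
        (CayleyGraph (Monoid.CoprodI H)
          {x : Monoid.CoprodI H | ∃ (i : ι) (h : H i), x = Monoid.CoprodI.of h ∧
            ((P i ∧ h ≠ 1) ∨ (¬ P i ∧ (h = gen i ∨ h = (gen i)⁻¹)))}).Adj u v := by
  classical
  intro B hB u hu v hv huv
  by_contra hadj
  obtain ⟨w, hwu, hwv, hwall⟩ := sep (P := P) (gen := gen) hcyc u v huv hadj
  obtain ⟨hconn, hdel⟩ := hB.1
  by_cases hwB : w ∈ B
  · have hc := hdel w hwB
    have hr := hc.preconnected ⟨u, hu, fun h => hwu (Set.mem_singleton_iff.mp h).symm⟩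
      ⟨v, hv, fun h => hwv (Set.mem_singleton_iff.mp h).symm⟩
    obtain ⟨q⟩ := hr
    let f : ((CayleyGraph (Monoid.CoprodI H) (plainSet H P gen)).induce (B \ {w})) →g
        (CayleyGraph (Monoid.CoprodI H) (plainSet H P gen)) :=
      ⟨Subtype.val, fun {a b} hab => hab⟩
    have hmem := hwall (q.map f)
    rw [SimpleGraph.Walk.support_map] at hmem
    obtain ⟨⟨z, hz⟩, _, hzw⟩ := List.mem_map.mp hmem
    exact hz.2 (show z ∈ ({w} : Set _) from by rw [Set.mem_singleton_iff]; exact hzw)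
  · have hr := hconn.preconnected ⟨u, hu⟩ ⟨v, hv⟩
    obtain ⟨q⟩ := hr
    let f : ((CayleyGraph (Monoid.CoprodI H) (plainSet H P gen)).induce B) →g
        (CayleyGraph (Monoid.CoprodI H) (plainSet H P gen)) :=
      ⟨Subtype.val, fun {a b} hab => hab⟩
    have hmem := hwall (q.map f)
    rw [SimpleGraph.Walk.support_map] at hmem
    obtain ⟨⟨z, hz⟩, _, hzw⟩ := List.mem_map.mp hmem
    exact hwB (by rw [← hzw]; exact hz)
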